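/- For 0 ≤ s < 1/2, each frequency map ω_n : h^{1/2−s}_+ → ℝ, ζ ↦ n² − 2∑_k min(n,k)|ζ_k|², is sequentially weakly continuous: if ζ^{(j)} ⇀ ζ weakly in h^{1/2−s}_+ then ω_n(ζ^{(j)}) → ω_n(ζ). -/

import Mathlib

noncomputable section

open scoped BigOperators

/-- Membership of `h^t_+`: sequences indexed by `k : ℕ` (the mode `k+1 ≥ 1`)
with `∑ (k+1)^{2t} |ζ_k|² < ∞`. -/
def hMem (t : ℝ) (ζ : ℕ → ℂ) : Prop :=
  Summable fun k : ℕ => ((k : ℝ) + 1) ^ (2 * t) * ‖ζ k‖ ^ 2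

/-- The Benjamin–Ono frequency `ω_n(ζ) = n² − 2 ∑_{k≥1} min(n,k)|ζ_k|²`. -/
def omegaBO (n : ℕ) (ζ : ℕ → ℂ) : ℝ :=
  (n : ℝ) ^ 2 - 2 * ∑' k : ℕ, min (n : ℝ) ((k : ℝ) + 1) * ‖ζ k‖ ^ 2

open Filter
open scoped ComplexConjugate ENNReal ComplexInnerProductSpace

lemma unif_bound (t : ℝ) (ht : 0 < t) (ζj : ℕ → ℕ → ℂ)
    (hmemj : ∀ j, Summable fun k : ℕ => ((k : ℝ) + 1) ^ (2*t) * ‖ζj j k‖ ^ 2)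
    (hconv : ∀ η : ℕ → ℂ, (Summable fun k : ℕ => ((k : ℝ) + 1) ^ (2*t) * ‖η k‖ ^ 2) →
      ∃ L : ℂ, Tendsto (fun j : ℕ => ∑' k : ℕ,
          ((((k : ℝ) + 1) ^ (2*t) : ℝ) : ℂ) * (conj (η k) * ζj j k)) atTop (nhds L)) :
    ∃ C : ℝ, ∀ j, ∑' k : ℕ, ((k : ℝ) + 1) ^ (2*t) * ‖ζj j k‖ ^ 2 ≤ C := by
  have hkpos : ∀ k : ℕ, (0:ℝ) < (k : ℝ) + 1 := fun k => by positivity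
  set f : ℕ → ℕ → ℂ := fun j k => ((((k : ℝ) + 1) ^ t : ℝ) : ℂ) * ζj j k with hf
  have hnf : ∀ j k, ‖f j k‖ ^ (2:ℕ) = ((k : ℝ) + 1) ^ (2*t) * ‖ζj j k‖ ^ 2 := by
    intro j k
    have h1 : ‖f j k‖ = ((k : ℝ) + 1) ^ t * ‖ζj j k‖ := by
      simp [hf, Complex.norm_real, abs_of_nonneg (Real.rpow_nonneg (hkpos k).le t)]
    rw [h1, mul_pow, ← Real.rpow_natCast (((k:ℝ)+1) ^ t) 2,
      ← Real.rpow_mul (hkpos k).le]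
    norm_num [mul_comm t 2]
  have hmem2 : ∀ j, Memℓp (f j) (2 : ℝ≥0∞) := by
    intro j
    apply memℓp_gen
    have h2 : ((2 : ℝ≥0∞)).toReal = ((2:ℕ):ℝ) := by norm_num
    rw [h2]
    refine ((hmemj j).congr fun k => ?_)
    rw [Real.rpow_natCast]
    exact (hnf j k).symm
  set F : ℕ → lp (fun _ : ℕ => ℂ) 2 := fun j => ⟨f j, hmem2 j⟩ with hF
  set T : ℕ → (lp (fun _ : ℕ => ℂ) 2) →L[ℂ] ℂ := fun j => innerSL ℂ (F j) with hT
  have hbd : ∀ x : lp (fun _ : ℕ => ℂ) 2, ∃ C, ∀ j, ‖T j x‖ ≤ C := by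
    intro x
    have hxsum : Summable fun k : ℕ => ‖x k‖ ^ (2:ℕ) := by
      have h := (memℓp_gen_iff (p := (2:ℝ≥0∞)) (by norm_num)).1 (lp.memℓp x)
      have h2 : ((2 : ℝ≥0∞)).toReal = ((2:ℕ):ℝ) := by norm_num
      rw [h2] at h
      exact h.congr fun k => Real.rpow_natCast _ 2
    set η : ℕ → ℂ := fun k => ((((k : ℝ) + 1) ^ (-t) : ℝ) : ℂ) * x k with hη
    have hcancel : ∀ k : ℕ, ((k:ℝ)+1) ^ (2*t) * (((k:ℝ)+1) ^ (-t)) ^ (2:ℕ) = 1 := by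
      intro k
      rw [← Real.rpow_natCast (((k:ℝ)+1) ^ (-t)) 2, ← Real.rpow_mul (hkpos k).le,
        ← Real.rpow_add (hkpos k), show 2*t + -t*((2:ℕ):ℝ) = 0 by push_cast; ring,
        Real.rpow_zero]
    have hhalf : ∀ k : ℕ, ((k:ℝ)+1) ^ (2*t) * ((k:ℝ)+1) ^ (-t) = ((k:ℝ)+1) ^ t := by
      intro k
      rw [← Real.rpow_add (hkpos k)]; ring_nf
    have hηmem : Summable fun k : ℕ => ((k : ℝ) + 1) ^ (2*t) * ‖η k‖ ^ 2 := by
      refine hxsum.congr fun k => ?_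
      have h1 : ‖η k‖ = ((k : ℝ) + 1) ^ (-t) * ‖x k‖ := by
        simp [hη, Complex.norm_real, abs_of_nonneg (Real.rpow_nonneg (hkpos k).le _)]
      rw [h1, mul_pow, ← mul_assoc, hcancel, one_mul]
    obtain ⟨L, hL⟩ := hconv η hηmem
    have hkey : ∀ j, T j x = conj (∑' k : ℕ,
        ((((k : ℝ) + 1) ^ (2*t) : ℝ) : ℂ) * (conj (η k) * ζj j k)) := by
      intro j
      have h1 : T j x = conj ((inner ℂ x (F j) : ℂ)) := (inner_conj_symm (F j) x).symm
      rw [h1]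
      congr 1
      rw [lp.inner_eq_tsum]
      refine tsum_congr fun k => ?_
      have hFk : (F j : ∀ _ : ℕ, ℂ) k = f j k := rfl
      rw [RCLike.inner_apply, hFk]
      simp only [hη, hf, map_mul, Complex.conj_ofReal]
      rw [show ((((k:ℝ)+1) ^ t : ℝ) : ℂ)
          = ((((k:ℝ)+1) ^ (2*t) * ((k:ℝ)+1) ^ (-t) : ℝ) : ℂ) by rw [hhalf],
        Complex.ofReal_mul]
      ring
    have htend : Tendsto (fun j => T j x) atTop (nhds (conj L)) := by
      simp_rw [hkey]
      exact (Complex.continuous_conj.tendsto L).comp hL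
    obtain ⟨C, hC⟩ := htend.norm.bddAbove_range
    exact ⟨C, fun j => hC (Set.mem_range_self j)⟩
  obtain ⟨C', hC'⟩ := banach_steinhaus hbd
  refine ⟨C' ^ 2, fun j => ?_⟩
  have hnorm : ‖F j‖ ≤ C' := by
    have h := hC' j
    rwa [hT, innerSL_apply_norm] at h
  have h2 : ‖F j‖ ^ ((2:ℝ≥0∞)).toReal = ∑' k, ‖f j k‖ ^ ((2:ℝ≥0∞)).toReal :=
    lp.norm_rpow_eq_tsum (by norm_num) (F j)
  have h2' : ((2 : ℝ≥0∞)).toReal = ((2:ℕ):ℝ) := by norm_num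
  rw [h2'] at h2
  simp_rw [Real.rpow_natCast] at h2
  calc ∑' k : ℕ, ((k : ℝ) + 1) ^ (2*t) * ‖ζj j k‖ ^ 2
      = ‖F j‖ ^ (2:ℕ) := by rw [h2]; exact tsum_congr fun k => (hnf j k).symm
    _ ≤ C' ^ 2 := by
        have h0 : (0:ℝ) ≤ ‖F j‖ := norm_nonneg _
        exact pow_le_pow_left₀ h0 hnorm 2


set_option maxHeartbeats 1000000 in
/-- For `0 ≤ s < 1/2`, each frequency map `ω_n : h^{1/2−s}_+ → ℝ` is
sequentially weakly continuous: if `ζ⁽ʲ⁾ ⇀ ζ` weakly in the Hilbert space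
`h^{1/2−s}_+` (i.e. the inner products against every element of `h^{1/2-s}_+`
converge) then `ω_n(ζ⁽ʲ⁾) → ω_n(ζ)`. -/
theorem stmt14 (s : ℝ) (hs0 : 0 ≤ s) (hs : s < 1 / 2) (n : ℕ)
    (ζj : ℕ → ℕ → ℂ) (ζ : ℕ → ℂ)
    (hmemj : ∀ j : ℕ, hMem (1 / 2 - s) (ζj j))
    (hmem : hMem (1 / 2 - s) ζ)
    (hweak : ∀ η : ℕ → ℂ, hMem (1 / 2 - s) η →
      Filter.Tendsto
        (fun j : ℕ => ∑' k : ℕ,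
          ((((k : ℝ) + 1) ^ (2 * (1 / 2 - s)) : ℝ) : ℂ) * ((starRingEnd ℂ) (η k) * ζj j k))
        Filter.atTop
        (nhds (∑' k : ℕ,
          ((((k : ℝ) + 1) ^ (2 * (1 / 2 - s)) : ℝ) : ℂ) * ((starRingEnd ℂ) (η k) * ζ k)))) :
    Filter.Tendsto (fun j : ℕ => omegaBO n (ζj j)) Filter.atTop (nhds (omegaBO n ζ)) := by
  have ht : 0 < 1 / 2 - s := by linarith
  have h2t : 0 < 2 * (1 / 2 - s) := by linarith
  have hkpos : ∀ k : ℕ, (0:ℝ) < (k : ℝ) + 1 := fun k => by positivity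
  set w : ℕ → ℝ := fun k => ((k : ℝ) + 1) ^ (2 * (1 / 2 - s)) with hw
  have hwpos : ∀ k, 0 < w k := fun k => Real.rpow_pos_of_pos (hkpos k) _
  have hw1 : ∀ k, 1 ≤ w k := by
    intro k
    have h' := Real.rpow_le_rpow (by norm_num : (0:ℝ) ≤ 1)
      (le_add_of_nonneg_left (Nat.cast_nonneg k) : (1:ℝ) ≤ (k:ℝ) + 1) h2t.le
    rw [Real.one_rpow] at h'
    exact h'
  have hwmono : ∀ K k : ℕ, K ≤ k → w K ≤ w k := by
    intro K k hKk
    exact Real.rpow_le_rpow (hkpos K).le (by have h' : (K:ℝ) ≤ (k:ℝ) := Nat.cast_le.mpr hKk; linarith) h2t.le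
  -- componentwise convergence
  have hcomp : ∀ k0 : ℕ, Filter.Tendsto (fun j => ζj j k0) Filter.atTop (nhds (ζ k0)) := by
    intro k0
    set η : ℕ → ℂ := fun k => if k = k0 then (((w k0)⁻¹ : ℝ) : ℂ) else 0 with hη
    have hηmem : hMem (1 / 2 - s) η := by
      apply summable_of_ne_finset_zero (s := {k0})
      intro k hk
      simp only [Finset.mem_singleton] at hk
      simp [hη, if_neg hk]
    have key : ∀ u : ℕ → ℂ, (∑' k : ℕ,
        ((((k : ℝ) + 1) ^ (2 * (1 / 2 - s)) : ℝ) : ℂ) * ((starRingEnd ℂ) (η k) * u k)) = u k0 := by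
      intro u
      rw [tsum_eq_single k0]
      · simp only [hη, if_pos rfl, Complex.conj_ofReal]
        rw [← mul_assoc, ← Complex.ofReal_mul, mul_inv_cancel₀ (hwpos k0).ne']
        simp
      · intro b hb
        simp [hη, if_neg hb]
    have := hweak η hηmem
    rw [key ζ] at this
    refine this.congr fun j => ?_
    rw [key (ζj j)]
  -- uniform bound
  obtain ⟨C, hC⟩ := unif_bound (1 / 2 - s) ht ζj hmemj
    (fun η hη => ⟨_, hweak η hη⟩)
  have hC0 : (0:ℝ) ≤ C :=
    le_trans (tsum_nonneg fun k => by positivity) (hC 0)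
  set B : ℝ := ∑' k : ℕ, w k * ‖ζ k‖ ^ 2 with hB
  have hB0 : (0:ℝ) ≤ B := tsum_nonneg fun k => by positivity
  -- the coefficients
  set a : ℕ → ℝ := fun k => min (n : ℝ) ((k : ℝ) + 1) with ha
  have ha0 : ∀ k, 0 ≤ a k := fun k => le_min (by positivity) (by positivity)
  have han : ∀ k, a k ≤ (n:ℝ) := fun k => min_le_left _ _
  -- summability of the weighted series
  have hsumm : ∀ u : ℕ → ℂ, (Summable fun k => w k * ‖u k‖ ^ 2) →
      Summable fun k => a k * ‖u k‖ ^ 2 := by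
    intro u hu
    refine Summable.of_nonneg_of_le (fun k => by positivity) (fun k => ?_) (hu.mul_left (n:ℝ))
    have h1 : a k ≤ (n:ℝ) * w k := le_trans (han k)
      (le_mul_of_one_le_right (by positivity) (hw1 k))
    calc a k * ‖u k‖ ^ 2 ≤ ((n:ℝ) * w k) * ‖u k‖ ^ 2 :=
          mul_le_mul_of_nonneg_right h1 (by positivity)
      _ = (n:ℝ) * (w k * ‖u k‖ ^ 2) := by ring
  have hsummj : ∀ j, Summable fun k => a k * ‖ζj j k‖ ^ 2 := fun j => hsumm _ (hmemj j)
  have hsummL : Summable fun k => a k * ‖ζ k‖ ^ 2 := hsumm _ hmem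
  -- tail estimate
  have htail : ∀ (u : ℕ → ℂ), (Summable fun k => w k * ‖u k‖ ^ 2) → ∀ K : ℕ,
      (∑' i : ℕ, a (i + K) * ‖u (i + K)‖ ^ 2) ≤ (n : ℝ) / w K * ∑' k : ℕ, w k * ‖u k‖ ^ 2 := by
    intro u hu K
    have hdiv0 : (0:ℝ) ≤ (n:ℝ) / w K := by positivity
    have hshift : Summable fun i => w (i + K) * ‖u (i + K)‖ ^ 2 :=
      (summable_nat_add_iff K).2 hu
    have hstep : ∀ i : ℕ, a (i + K) * ‖u (i + K)‖ ^ 2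
        ≤ (n:ℝ) / w K * (w (i + K) * ‖u (i + K)‖ ^ 2) := by
      intro i
      have h1 : a (i + K) ≤ (n:ℝ) / w K * w (i + K) := by
        calc a (i + K) ≤ (n:ℝ) := han _
          _ = (n:ℝ) / w K * w K := by rw [div_mul_cancel₀ _ (hwpos K).ne']
          _ ≤ (n:ℝ) / w K * w (i + K) :=
            mul_le_mul_of_nonneg_left (hwmono K (i + K) (Nat.le_add_left K i)) hdiv0
      calc a (i + K) * ‖u (i + K)‖ ^ 2 ≤ ((n:ℝ) / w K * w (i + K)) * ‖u (i + K)‖ ^ 2 :=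
            mul_le_mul_of_nonneg_right h1 (by positivity)
        _ = (n:ℝ) / w K * (w (i + K) * ‖u (i + K)‖ ^ 2) := by ring
    calc (∑' i : ℕ, a (i + K) * ‖u (i + K)‖ ^ 2)
        ≤ ∑' i : ℕ, (n:ℝ) / w K * (w (i + K) * ‖u (i + K)‖ ^ 2) :=
          Summable.tsum_le_tsum hstep ((summable_nat_add_iff K).2 (hsumm u hu)) (hshift.mul_left _)
      _ = (n:ℝ) / w K * ∑' i : ℕ, w (i + K) * ‖u (i + K)‖ ^ 2 := tsum_mul_left
      _ ≤ (n:ℝ) / w K * ∑' k : ℕ, w k * ‖u k‖ ^ 2 := by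
          refine mul_le_mul_of_nonneg_left ?_ hdiv0
          have := Summable.sum_add_tsum_nat_add K hu
          have hfin : 0 ≤ ∑ i ∈ Finset.range K, w i * ‖u i‖ ^ 2 :=
            Finset.sum_nonneg fun i _ => by positivity
          linarith
  -- convergence of the full sums
  have hG : Filter.Tendsto (fun j => ∑' k : ℕ, a k * ‖ζj j k‖ ^ 2) Filter.atTop
      (nhds (∑' k : ℕ, a k * ‖ζ k‖ ^ 2)) := by
    rw [Metric.tendsto_atTop]
    intro ε hε
    set D : ℝ := (n:ℝ) * (C + B) with hD
    have hD0 : 0 ≤ D := by positivity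
    have hwK : Filter.Tendsto (fun K : ℕ => w K) Filter.atTop Filter.atTop := by
      have h1 : Filter.Tendsto (fun K : ℕ => (K:ℝ) + 1) Filter.atTop Filter.atTop :=
        Filter.tendsto_atTop_add_const_right _ 1 tendsto_natCast_atTop_atTop
      exact (tendsto_rpow_atTop h2t).comp h1
    obtain ⟨K, hK⟩ := (hwK.eventually_gt_atTop (2 * (D + 1) / ε)).exists
    have hwKpos := hwpos K
    have htailbound : (n:ℝ) / w K * C + (n:ℝ) / w K * B < ε / 2 := by
      rw [div_lt_iff₀ hε] at hK
      have : (n:ℝ) / w K * C + (n:ℝ) / w K * B = D / w K := by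
        field_simp [hD]; ring
      rw [this, div_lt_iff₀ hwKpos]
      nlinarith
    -- finite part
    have hfin : Filter.Tendsto (fun j => ∑ k ∈ Finset.range K, a k * ‖ζj j k‖ ^ 2)
        Filter.atTop (nhds (∑ k ∈ Finset.range K, a k * ‖ζ k‖ ^ 2)) := by
      refine tendsto_finset_sum _ fun k _ => ?_
      exact (((hcomp k).norm.pow 2).const_mul (a k))
    rw [Metric.tendsto_atTop] at hfin
    obtain ⟨N, hN⟩ := hfin (ε / 2) (by linarith)
    refine ⟨N, fun j hj => ?_⟩
    have hsplitj := Summable.sum_add_tsum_nat_add K (hsummj j)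
    have hsplitL := Summable.sum_add_tsum_nat_add K hsummL
    have htj := htail (ζj j) (hmemj j) K
    have htL := htail ζ hmem K
    have htjC : (∑' i : ℕ, a (i + K) * ‖ζj j (i + K)‖ ^ 2) ≤ (n:ℝ) / w K * C :=
      le_trans htj (mul_le_mul_of_nonneg_left (hC j) (by positivity))
    have htj0 : (0:ℝ) ≤ ∑' i : ℕ, a (i + K) * ‖ζj j (i + K)‖ ^ 2 :=
      tsum_nonneg fun i => by positivity
    have htL0 : (0:ℝ) ≤ ∑' i : ℕ, a (i + K) * ‖ζ (i + K)‖ ^ 2 :=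
      tsum_nonneg fun i => by positivity
    have hdist := hN j hj
    rw [Real.dist_eq] at hdist ⊢
    rw [← hsplitj, ← hsplitL]
    have habs : |(∑' i : ℕ, a (i + K) * ‖ζj j (i + K)‖ ^ 2)
        - ∑' i : ℕ, a (i + K) * ‖ζ (i + K)‖ ^ 2| ≤ (n:ℝ) / w K * C + (n:ℝ) / w K * B := by
      rw [abs_le]
      constructor <;> nlinarith [mul_le_mul_of_nonneg_left htL (le_refl ((0:ℝ)))]
    calc |(∑ k ∈ Finset.range K, a k * ‖ζj j k‖ ^ 2 + ∑' i : ℕ, a (i + K) * ‖ζj j (i + K)‖ ^ 2)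
          - (∑ k ∈ Finset.range K, a k * ‖ζ k‖ ^ 2 + ∑' i : ℕ, a (i + K) * ‖ζ (i + K)‖ ^ 2)|
        ≤ |∑ k ∈ Finset.range K, a k * ‖ζj j k‖ ^ 2 - ∑ k ∈ Finset.range K, a k * ‖ζ k‖ ^ 2|
          + |(∑' i : ℕ, a (i + K) * ‖ζj j (i + K)‖ ^ 2)
            - ∑' i : ℕ, a (i + K) * ‖ζ (i + K)‖ ^ 2| := by
          rw [show (∑ k ∈ Finset.range K, a k * ‖ζj j k‖ ^ 2 + ∑' i : ℕ, a (i + K) * ‖ζj j (i + K)‖ ^ 2)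
              - (∑ k ∈ Finset.range K, a k * ‖ζ k‖ ^ 2 + ∑' i : ℕ, a (i + K) * ‖ζ (i + K)‖ ^ 2)
              = (∑ k ∈ Finset.range K, a k * ‖ζj j k‖ ^ 2 - ∑ k ∈ Finset.range K, a k * ‖ζ k‖ ^ 2)
              + ((∑' i : ℕ, a (i + K) * ‖ζj j (i + K)‖ ^ 2)
                - ∑' i : ℕ, a (i + K) * ‖ζ (i + K)‖ ^ 2) by ring]
          exact abs_add_le _ _
      _ < ε / 2 + ε / 2 := by
          apply add_lt_add_of_lt_of_le hdist
          exact le_trans habs htailbound.le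
      _ = ε := by ring
  -- conclude
  simp only [omegaBO]
  exact tendsto_const_nhds.sub (hG.const_mul 2)
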